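/- arXiv:2207.06305 — 2 statements merged into one kernel-verified Lean document; each statement's English description precedes it below -/
import Mathlib

section
/- Consider minimizing Σ_{i=1}^p (1/π_i - 1) d_i² over probabilities π_i subject to Σ_{i=1}^p π_i = b and 0 ≤ π_i ≤ 1. Order |d_(1)| ≤ ⋯ ≤ |d_(p)| and let c be the largest integer satisfying 0 < b + c - p ≤ Σ_{i=1}^c |d_(i)|/|d_(c)|. Then the minimizer is given by π_(i) = (b + c - p)·|d_(i)|/Σ_{j=1}^c |d_(j)| for i ≤ c and π_(i) = 1 for i > c. -/
open Finset

theorem stmt6 (p b : ℕ) (hb1 : 1 ≤ b) (hbp : b ≤ p) (d : Fin p → ℝ)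
    (hd : ∀ i, d i ≠ 0) (hsorted : Monotone fun i : Fin p => |d i|)
    (c : ℕ) (hc0 : 0 < c) (hcp : c ≤ p)
    (hclo : 0 < (b : ℝ) + c - p)
    (hchi : (b : ℝ) + c - p ≤
      ∑ i ∈ Finset.univ.filter (fun i : Fin p => (i : ℕ) < c),
        |d i| / |d ⟨c - 1, by omega⟩|)
    (hmax : ∀ c' : ℕ, ∀ (hlt : c < c') (hle : c' ≤ p),
      ¬(0 < (b : ℝ) + c' - p ∧ (b : ℝ) + c' - p ≤
        ∑ i ∈ Finset.univ.filter (fun i : Fin p => (i : ℕ) < c'),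
          |d i| / |d ⟨c' - 1, by omega⟩|))
    (π : Fin p → ℝ)
    (hπ : ∀ i : Fin p, π i =
      if (i : ℕ) < c then
        ((b : ℝ) + c - p) * |d i| /
          (∑ j ∈ Finset.univ.filter (fun j : Fin p => (j : ℕ) < c), |d j|)
      else 1) :
    ((∀ i, 0 < π i ∧ π i ≤ 1) ∧ ∑ i : Fin p, π i = (b : ℝ)) ∧
    ∀ q : Fin p → ℝ, (∀ i, 0 < q i ∧ q i ≤ 1) → (∑ i : Fin p, q i = (b : ℝ)) →
      ∑ i : Fin p, (1 / π i - 1) * d i ^ 2 ≤ ∑ i : Fin p, (1 / q i - 1) * d i ^ 2 := by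
  have habs : ∀ i : Fin p, 0 < |d i| := fun i => abs_pos.mpr (hd i)
  set A : Finset (Fin p) := Finset.univ.filter (fun i : Fin p => (i : ℕ) < c) with hA
  set S : ℝ := ∑ j ∈ A, |d j| with hSdef
  set β : ℝ := (b : ℝ) + c - p with hβdef
  have hS : 0 < S := Finset.sum_pos (fun i _ => habs i)
    ⟨⟨0, lt_of_lt_of_le hc0 hcp⟩, by simp [hA, hc0]⟩
  have hcardA : A.card = c := by
    have h : A = (Finset.range c).attachFin
        (fun m hm => lt_of_lt_of_le (Finset.mem_range.mp hm) hcp) := by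
      ext i; simp [hA, Finset.mem_attachFin]
    rw [h, Finset.card_attachFin, Finset.card_range]
  have hdc1 : (0:ℝ) < |d ⟨c - 1, by omega⟩| := habs _
  have hchi' : β * |d ⟨c - 1, by omega⟩| ≤ S := by
    have h1 : β ≤ S / |d ⟨c - 1, by omega⟩| := by
      rw [hSdef, Finset.sum_div]; exact hchi
    calc β * |d ⟨c - 1, by omega⟩| ≤ (S / |d ⟨c - 1, by omega⟩|) * |d ⟨c - 1, by omega⟩| :=
          mul_le_mul_of_nonneg_right h1 hdc1.le
      _ = S := div_mul_cancel₀ _ hdc1.ne'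
  have hbound : ∀ i : Fin p, (i : ℕ) < c → β * |d i| ≤ S := by
    intro i hi
    have hle : |d i| ≤ |d ⟨c - 1, by omega⟩| := by
      have : i ≤ (⟨c - 1, by omega⟩ : Fin p) := by
        rw [Fin.le_def]; simp; omega
      exact hsorted this
    calc β * |d i| ≤ β * |d ⟨c - 1, by omega⟩| := mul_le_mul_of_nonneg_left hle hclo.le
      _ ≤ S := hchi'
  have hfeas : ∀ i, 0 < π i ∧ π i ≤ 1 := by
    intro i
    rw [hπ i]
    by_cases hi : (i : ℕ) < c
    · rw [if_pos hi]
      refine ⟨div_pos (mul_pos hclo (habs i)) hS, ?_⟩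
      rw [div_le_one hS]
      exact hbound i hi
    · rw [if_neg hi]; exact ⟨one_pos, le_refl 1⟩
  have hsum : ∑ i : Fin p, π i = (b : ℝ) := by
    rw [← Finset.sum_filter_add_sum_filter_not Finset.univ (fun i : Fin p => (i : ℕ) < c) π]
    have h1 : ∑ i ∈ A, π i = β := by
      rw [Finset.sum_congr rfl (fun i hi => by
        rw [hπ i, if_pos (by simpa [hA] using hi)])]
      rw [← Finset.sum_div, ← Finset.mul_sum, ← hSdef, mul_div_assoc, div_self hS.ne',
        mul_one]
    have hcard2 : (Finset.univ.filter (fun i : Fin p => ¬(i : ℕ) < c)).card = p - c := by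
      have h := Finset.card_filter_add_card_filter_not
        (s := (Finset.univ : Finset (Fin p))) (p := fun i : Fin p => (i : ℕ) < c)
      simp only [Finset.card_univ, Fintype.card_fin] at h
      rw [← hA] at h
      omega
    have h2 : ∑ i ∈ Finset.univ.filter (fun i : Fin p => ¬(i : ℕ) < c), π i
        = (p : ℝ) - c := by
      rw [Finset.sum_congr rfl (fun i hi => by
        rw [hπ i, if_neg (by simpa using (Finset.mem_filter.mp hi).2)])]
      rw [Finset.sum_const, nsmul_eq_mul, mul_one, hcard2, Nat.cast_sub hcp]
    rw [← hA, h1, h2, hβdef]; ring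
  refine ⟨⟨hfeas, hsum⟩, ?_⟩
  intro q hq hqsum
  set lam : ℝ := (S / β) ^ 2 with hlamdef
  have hlam0 : 0 ≤ lam := sq_nonneg _
  have hlam : ∀ i : Fin p, c ≤ (i : ℕ) → lam ≤ d i ^ 2 := by
    intro i hi
    have hcp' : c < p := lt_of_le_of_lt hi i.isLt
    set ic : Fin p := ⟨c, hcp'⟩ with hic
    have hm := hmax (c + 1) (Nat.lt_succ_self c) hcp'
    push_neg at hm
    have h0 : (0:ℝ) < (b : ℝ) + (c + 1 : ℕ) - p := by
      push_cast
      rw [hβdef] at hclo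
      linarith
    have hlt := hm h0
    have hsplit : ∑ i ∈ Finset.univ.filter (fun i : Fin p => (i : ℕ) < c + 1), |d i|
        = S + |d ic| := by
      have hins : Finset.univ.filter (fun i : Fin p => (i : ℕ) < c + 1) = insert ic A := by
        ext j
        simp [hA, hic, Fin.ext_iff]
        omega
      rw [hins, Finset.sum_insert (by simp [hA, hic]), hSdef]
      ring
    have hicpos : (0:ℝ) < |d ic| := habs ic
    have hlt2 : (S + |d ic|) / |d ic| < β + 1 := by
      have heq : ∑ i ∈ Finset.univ.filter (fun i : Fin p => (i : ℕ) < c + 1),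
          |d i| / |d ⟨c + 1 - 1, by omega⟩| = (S + |d ic|) / |d ic| := by
        rw [← Finset.sum_div, hsplit]
        congr 1
      calc (S + |d ic|) / |d ic| = _ := heq.symm
        _ < (b : ℝ) + (c + 1 : ℕ) - p := hlt
        _ = β + 1 := by rw [hβdef]; push_cast; ring
    have hSlt : S < β * |d ic| := by
      rw [div_lt_iff₀ hicpos] at hlt2
      linarith
    have hdiv : S / β < |d ic| := by
      rw [div_lt_iff₀ hclo]
      linarith [hSlt, mul_comm β |d ic|]
    have hmono : |d ic| ≤ |d i| := hsorted (by rw [Fin.le_def]; exact hi)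
    have h1 : S / β ≤ |d i| := le_trans hdiv.le hmono
    have h2 : (S / β) ^ 2 ≤ |d i| ^ 2 :=
      pow_le_pow_left₀ (div_nonneg hS.le hclo.le) h1 2
    rw [sq_abs] at h2
    exact h2
  have conv : ∀ x y : ℝ, 0 < x → 0 < y → 1 / x - 1 / y ≤ (y - x) / x ^ 2 := by
    intro x y hx hy
    have h : (y - x) / x ^ 2 - (1 / x - 1 / y) = (y - x) ^ 2 / (x ^ 2 * y) := by
      field_simp
    have h2 : (0:ℝ) ≤ (y - x) ^ 2 / (x ^ 2 * y) := by positivity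
    linarith
  have key : ∀ i : Fin p, (1 / π i - 1 / q i) * d i ^ 2 ≤ lam * (q i - π i) := by
    intro i
    have hqpos := (hq i).1
    have hπpos := (hfeas i).1
    have hconv := conv (π i) (q i) hπpos hqpos
    have hstep : (1 / π i - 1 / q i) * d i ^ 2 ≤ ((q i - π i) / π i ^ 2) * d i ^ 2 :=
      mul_le_mul_of_nonneg_right hconv (sq_nonneg _)
    by_cases hi : (i : ℕ) < c
    · have hπi : π i = β * |d i| / S := by rw [hπ i, if_pos hi]
      have hπsq : π i ^ 2 * lam = d i ^ 2 := by
        rw [hπi, hlamdef]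
        field_simp
        rw [sq_abs]
      have hid : ((q i - π i) / π i ^ 2) * d i ^ 2 = lam * (q i - π i) := by
        rw [← hπsq]
        field_simp
      linarith [hstep, hid.symm.le, hid.le]
    · have hπi : π i = 1 := by rw [hπ i, if_neg hi]
      have hq1 : q i ≤ 1 := (hq i).2
      have hlami : lam ≤ d i ^ 2 := hlam i (le_of_not_gt hi)
      rw [hπi] at hstep
      have h3 : ((q i - 1) / (1:ℝ) ^ 2) * d i ^ 2 = (q i - 1) * d i ^ 2 := by ring
      have h4 : (q i - 1) * d i ^ 2 ≤ (q i - 1) * lam :=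
        mul_le_mul_of_nonpos_left hlami (by linarith)
      rw [hπi]
      calc (1 / 1 - 1 / q i) * d i ^ 2 ≤ ((q i - 1) / (1:ℝ) ^ 2) * d i ^ 2 := hstep
        _ = (q i - 1) * d i ^ 2 := h3
        _ ≤ (q i - 1) * lam := h4
        _ = lam * (q i - 1) := by ring
  have hsum2 : ∑ i : Fin p, (1 / π i - 1 / q i) * d i ^ 2
      ≤ ∑ i : Fin p, lam * (q i - π i) :=
    Finset.sum_le_sum (fun i _ => key i)
  have hz : ∑ i : Fin p, lam * (q i - π i) = 0 := by
    rw [← Finset.mul_sum, Finset.sum_sub_distrib, hqsum, hsum]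
    ring
  have hsplit2 : ∑ i : Fin p, (1 / π i - 1) * d i ^ 2 - ∑ i : Fin p, (1 / q i - 1) * d i ^ 2
      = ∑ i : Fin p, (1 / π i - 1 / q i) * d i ^ 2 := by
    rw [← Finset.sum_sub_distrib]
    congr 1
    funext i
    ring
  linarith [hsum2, hz, hsplit2]
end

section
/- Let F : ℝⁿ → ℝ have L-Lipschitz gradient, and let Y = {c, v¹, …, vⁿ} ⊂ B(c; δ) be poised for linear interpolation with V = [v¹-c, …, vⁿ-c] invertible. Let g be the linear interpolation gradient satisfying (vʲ-c)ᵀ g = F(vʲ) - F(c) for j = 1,…,n. Then ‖∇F(c) - g‖ ≤ (L√n/2)‖V⁻¹‖ δ². -/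
open scoped RealInnerProductSpace

open Matrix
set_option synthInstance.maxHeartbeats 1000000
set_option maxHeartbeats 2000000

lemma descent9 {n : ℕ} (F : EuclideanSpace ℝ (Fin n) → ℝ) (L : ℝ) (hL : 0 ≤ L)
    (hdiff : Differentiable ℝ F)
    (hlip : ∀ a b : EuclideanSpace ℝ (Fin n), ‖gradient F a - gradient F b‖ ≤ L * ‖a - b‖)
    (a b : EuclideanSpace ℝ (Fin n)) :
    |F b - F a - ⟪gradient F a, b - a⟫| ≤ L / 2 * ‖b - a‖ ^ 2 := by
  set d := b - a with hd
  have hγ : ∀ t : ℝ, HasDerivAt (fun t : ℝ => a + t • d) d t := fun t => by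
    simpa using ((hasDerivAt_id t).smul_const d).const_add a
  have hφ : ∀ t : ℝ, HasDerivAt (fun t : ℝ => F (a + t • d) - t * ⟪gradient F a, d⟫)
      (⟪gradient F (a + t • d), d⟫ - ⟪gradient F a, d⟫) t := by
    intro t
    have h1 : HasDerivAt (fun t : ℝ => F (a + t • d)) (⟪gradient F (a + t • d), d⟫) t := by
      have := ((hdiff (a + t • d)).hasGradientAt.hasFDerivAt).comp_hasDerivAt t (hγ t)
      simpa [Function.comp_def, InnerProductSpace.toDual_apply_apply] using this
    exact h1.sub (hasDerivAt_mul_const ⟪gradient F a, d⟫)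
  have hgc : Continuous (gradient F) := by
    have : LipschitzWith (Real.toNNReal L) (gradient F) := by
      apply LipschitzWith.of_dist_le_mul
      intro x y
      simpa [dist_eq_norm, Real.coe_toNNReal L hL] using hlip x y
    exact this.continuous
  have hcont : Continuous fun t : ℝ => ⟪gradient F (a + t • d), d⟫ - ⟪gradient F a, d⟫ :=
    ((hgc.comp (by continuity)).inner continuous_const).sub continuous_const
  have key : (F (a + (1:ℝ) • d) - 1 * ⟪gradient F a, d⟫) - (F (a + (0:ℝ) • d) - 0 * ⟪gradient F a, d⟫)
      = ∫ t in (0:ℝ)..1, (⟪gradient F (a + t • d), d⟫ - ⟪gradient F a, d⟫) :=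
    (intervalIntegral.integral_eq_sub_of_hasDerivAt (fun t _ => hφ t)
      (hcont.intervalIntegrable _ _)).symm
  have key2 : F b - F a - ⟪gradient F a, b - a⟫
      = ∫ t in (0:ℝ)..1, (⟪gradient F (a + t • d), d⟫ - ⟪gradient F a, d⟫) := by
    rw [← key]; simp [hd]; ring
  rw [key2]
  have hbound : ∀ t ∈ Set.uIoc (0:ℝ) 1,
      ‖⟪gradient F (a + t • d), d⟫ - ⟪gradient F a, d⟫‖ ≤ (L * ‖d‖ ^ 2) * t := by
    intro t ht
    rw [Set.uIoc_of_le zero_le_one] at ht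
    have h1 : ⟪gradient F (a + t • d), d⟫ - ⟪gradient F a, d⟫
        = ⟪gradient F (a + t • d) - gradient F a, d⟫ := by
      rw [inner_sub_left]
    rw [h1]
    calc ‖⟪gradient F (a + t • d) - gradient F a, d⟫‖
        ≤ ‖gradient F (a + t • d) - gradient F a‖ * ‖d‖ := norm_inner_le_norm _ _
      _ ≤ (L * ‖a + t • d - a‖) * ‖d‖ := by
          gcongr
          exact hlip _ _
      _ = (L * ‖d‖ ^ 2) * t := by
          simp only [add_sub_cancel_left]
          rw [norm_smul]
          simp [abs_of_nonneg ht.1.le]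
          ring
  have hI : (∫ t in (0:ℝ)..1, (L * ‖d‖ ^ 2) * t) = L / 2 * ‖d‖ ^ 2 := by
    rw [intervalIntegral.integral_const_mul]
    simp [integral_id]
    ring
  calc ‖∫ t in (0:ℝ)..1, (⟪gradient F (a + t • d), d⟫ - ⟪gradient F a, d⟫)‖
      ≤ |∫ t in (0:ℝ)..1, (L * ‖d‖ ^ 2) * t| := by
        apply intervalIntegral.norm_integral_le_abs_of_norm_le
        · exact (MeasureTheory.ae_restrict_iff' measurableSet_uIoc).2
            (Filter.Eventually.of_forall hbound)
        · exact ((continuous_const.mul continuous_id).intervalIntegrable _ _)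
    _ = L / 2 * ‖d‖ ^ 2 := by rw [hI]; exact abs_of_nonneg (by positivity)

theorem stmt9 {n : ℕ} (F : EuclideanSpace ℝ (Fin n) → ℝ) (L : ℝ) (hL : 0 ≤ L)
    (hdiff : Differentiable ℝ F)
    (hlip : ∀ a b : EuclideanSpace ℝ (Fin n), ‖gradient F a - gradient F b‖ ≤ L * ‖a - b‖)
    (c : EuclideanSpace ℝ (Fin n)) (δ : ℝ) (hδ : 0 < δ)
    (v : Fin n → EuclideanSpace ℝ (Fin n)) (hv : ∀ j, ‖v j - c‖ ≤ δ)
    (V : Matrix (Fin n) (Fin n) ℝ) (hV : ∀ i j, V i j = (v j - c) i)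
    (hVinv : IsUnit V.det)
    (g : EuclideanSpace ℝ (Fin n))
    (hg : ∀ j, ⟪v j - c, g⟫ = F (v j) - F c) :
    ‖gradient F c - g‖
      ≤ L * Real.sqrt n / 2 * ‖Matrix.toEuclideanCLM (𝕜 := ℝ) V⁻¹‖ * δ ^ 2 := by
  set e : EuclideanSpace ℝ (Fin n) := gradient F c - g with he
  have hje : ∀ j, |⟪v j - c, e⟫| ≤ L / 2 * δ ^ 2 := by
    intro j
    have h1 := descent9 F L hL hdiff hlip c (v j)
    have h2 : ⟪v j - c, e⟫ = -(F (v j) - F c - ⟪gradient F c, v j - c⟫) := by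
      rw [he, inner_sub_right, hg j, real_inner_comm]; ring
    rw [h2, abs_neg]
    calc |F (v j) - F c - ⟪gradient F c, v j - c⟫| ≤ L / 2 * ‖v j - c‖ ^ 2 := h1
      _ ≤ L / 2 * δ ^ 2 := by
          exact mul_le_mul_of_nonneg_left
            (pow_le_pow_left₀ (norm_nonneg _) (hv j) 2) (by linarith)
  have hVt : IsUnit (Vᵀ).det := by rw [Matrix.det_transpose]; exact hVinv
  have hmul : ∀ x : Fin n → ℝ, (Vᵀ)⁻¹.mulVec (Vᵀ.mulVec x) = x := by
    intro x; rw [Matrix.mulVec_mulVec, Matrix.nonsing_inv_mul _ hVt, Matrix.one_mulVec]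
  set w : EuclideanSpace ℝ (Fin n) :=
    (WithLp.equiv 2 (Fin n → ℝ)).symm (Vᵀ.mulVec (WithLp.equiv 2 (Fin n → ℝ) e)) with hw
  have hEe : Matrix.toEuclideanCLM (𝕜 := ℝ) (Vᵀ)⁻¹ w = e := by
    rw [hw, WithLp.equiv_symm_apply, Matrix.toEuclideanCLM_toLp]
    exact (congrArg (WithLp.equiv 2 (Fin n → ℝ)).symm
      (hmul ((WithLp.equiv 2 (Fin n → ℝ)) e))).trans (Equiv.symm_apply_apply _ _)
  have hnorm_e : ‖e‖ ≤ ‖Matrix.toEuclideanCLM (𝕜 := ℝ) (Vᵀ)⁻¹‖ * ‖w‖ := by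
    rw [← hEe]; exact ContinuousLinearMap.le_opNorm _ w
  have hnorm_tr : ‖Matrix.toEuclideanCLM (𝕜 := ℝ) (Vᵀ)⁻¹‖
      = ‖Matrix.toEuclideanCLM (𝕜 := ℝ) V⁻¹‖ := by
    rw [← Matrix.transpose_nonsing_inv]
    have h3 : (V⁻¹)ᵀ = (V⁻¹)ᴴ := by
      ext i j; simp [Matrix.conjTranspose_apply]
    rw [h3, show V⁻¹ᴴ = star V⁻¹ from rfl, map_star]
    rw [ContinuousLinearMap.star_eq_adjoint]
    exact ContinuousLinearMap.adjoint.norm_map _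
  have hwj : ∀ j, w j = ⟪v j - c, e⟫ := by
    intro j
    simp only [hw, WithLp.equiv_symm_apply, WithLp.equiv_apply, WithLp.ofLp_toLp, Matrix.mulVec, dotProduct,
      Matrix.transpose_apply, PiLp.inner_apply, RCLike.inner_apply, starRingEnd_apply, hV]
    refine Finset.sum_congr rfl fun i _ => ?_
    simp [mul_comm]
  have hwnorm : ‖w‖ ≤ Real.sqrt n * (L / 2 * δ ^ 2) := by
    rw [EuclideanSpace.norm_eq]
    have hstep : ∑ j, ‖w j‖ ^ 2 ≤ (n : ℝ) * (L / 2 * δ ^ 2) ^ 2 := by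
      calc ∑ j, ‖w j‖ ^ 2 ≤ ∑ _j : Fin n, (L / 2 * δ ^ 2) ^ 2 := by
            refine Finset.sum_le_sum fun j _ => ?_
            have := hje j
            rw [hwj j, Real.norm_eq_abs]
            exact pow_le_pow_left₀ (abs_nonneg _) this 2
        _ = (n : ℝ) * (L / 2 * δ ^ 2) ^ 2 := by
            rw [Finset.sum_const, Finset.card_univ, Fintype.card_fin, nsmul_eq_mul]
    calc Real.sqrt (∑ j, ‖w j‖ ^ 2) ≤ Real.sqrt ((n : ℝ) * (L / 2 * δ ^ 2) ^ 2) :=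
          Real.sqrt_le_sqrt hstep
      _ = Real.sqrt n * (L / 2 * δ ^ 2) := by
          rw [Real.sqrt_mul (Nat.cast_nonneg n), Real.sqrt_sq (by positivity)]
  calc ‖gradient F c - g‖ = ‖e‖ := rfl
    _ ≤ ‖Matrix.toEuclideanCLM (𝕜 := ℝ) V⁻¹‖ * ‖w‖ := by rw [← hnorm_tr]; exact hnorm_e
    _ ≤ ‖Matrix.toEuclideanCLM (𝕜 := ℝ) V⁻¹‖ * (Real.sqrt n * (L / 2 * δ ^ 2)) := by
        gcongr
    _ = L * Real.sqrt n / 2 * ‖Matrix.toEuclideanCLM (𝕜 := ℝ) V⁻¹‖ * δ ^ 2 := by ring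
end
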